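/- Let a > b > 0. Define the six points P₁ = (a, 0), P₂ = (a²/(a+b), b√(b(2a+b))/(a+b)), P₃ = (−a²/(a+b), b√(b(2a+b))/(a+b)), P₄ = (−a, 0), P₅ = −P₂, P₆ = −P₃. Then each Pᵢ lies on the ellipse x²/a² + y²/b² = 1, each side PᵢPᵢ₊₁ (indices mod 6) is tangent to the confocal ellipse with semi-axes a'' = a√(a(a+2b))/(a+b), b'' = b√(b(2a+b))/(a+b), and the perimeter of the hexagon equals 4(a² + ab + b²)/(a + b). -/

import Mathlib

/-- Euclidean distance between two points of the plane. -/
noncomputable def edist' (p q : ℝ × ℝ) : ℝ :=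
  Real.sqrt ((p.1 - q.1)^2 + (p.2 - q.2)^2)

/-- Point with parameter `t` on the line through `P` and `Q`. -/
def linePt (P Q : ℝ × ℝ) (t : ℝ) : ℝ × ℝ :=
  (P.1 + t*(Q.1 - P.1), P.2 + t*(Q.2 - P.2))

/-- The segment `PQ` is tangent to the curve `onC = 0`: the line through `P, Q`
meets the curve at exactly one point, which lies on the segment. -/
def TangentSeg (onC : ℝ × ℝ → Prop) (P Q : ℝ × ℝ) : Prop :=
  ∃ t ∈ Set.Icc (0:ℝ) 1, onC (linePt P Q t) ∧ ∀ s : ℝ, onC (linePt P Q s) → s = t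

lemma caustic_iff (a b r s : ℝ) (hb : 0 < b) (hab : b < a) (hr : r^2 = a*(a+2*b))
    (hs : s^2 = b*(2*a+b)) (p : ℝ × ℝ) :
    ((p.1/(a*r/(a+b)))^2 + (p.2/(b*s/(a+b)))^2 = 1) ↔
      ((2*a+b)*b^3*p.1^2 + (a+2*b)*a^3*p.2^2)*(a+b)^2 = (a+2*b)*a^3*((2*a+b)*b^3) := by
  have ha : 0 < a := hb.trans hab
  have hab0 : 0 < a + b := by linarith
  have h1 : (a*r)^2 = a^2*(a*(a+2*b)) := by rw [mul_pow, hr]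
  have h2 : (b*s)^2 = b^2*(b*(2*a+b)) := by rw [mul_pow, hs]
  rw [div_pow, div_pow, div_pow, div_pow, h1, h2]
  field_simp

lemma tangent12 (a b r s : ℝ) (hb : 0 < b) (hab : b < a) (hr : r^2 = a*(a+2*b))
    (hs : s^2 = b*(2*a+b)) :
    TangentSeg (fun p => (p.1/(a*r/(a+b)))^2 + (p.2/(b*s/(a+b)))^2 = 1)
      ((a,0) : ℝ × ℝ) (a^2/(a+b), b*s/(a+b)) := by
  have ha : 0 < a := hb.trans hab
  have hab0 : 0 < a + b := by linarith
  refine ⟨b/(a+b), ⟨by positivity, by rw [div_le_one hab0]; linarith⟩, ?_, ?_⟩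
  · refine (caustic_iff a b r s hb hab hr hs _).mpr ?_
    simp only [linePt]
    field_simp
    linear_combination (a*b^4*(a+2*b)) * hs
  · intro u hu
    replace hu := (caustic_iff a b r s hb hab hr hs _).mp hu
    simp only [linePt] at hu
    field_simp at hu
    have key2 : ((2*a+b)*b^3*a^2) * (((a+b)*u - b)^2) = 0 := by
      linear_combination a^2 * hu - (a^2*(a*(a+2*b)*b^2*u^2)) * hs
    have key : ((a+b)*u - b)^2 = 0 :=
      (mul_eq_zero.mp key2).resolve_left (by positivity)
    have h0 : (a+b)*u - b = 0 := pow_eq_zero_iff two_ne_zero |>.mp key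
    field_simp
    linarith

lemma tangent23 (a b r s : ℝ) (hb : 0 < b) (hab : b < a) (hr : r^2 = a*(a+2*b))
    (hs : s^2 = b*(2*a+b)) :
    TangentSeg (fun p => (p.1/(a*r/(a+b)))^2 + (p.2/(b*s/(a+b)))^2 = 1)
      ((a^2/(a+b), b*s/(a+b)) : ℝ × ℝ) (-(a^2/(a+b)), b*s/(a+b)) := by
  have ha : 0 < a := hb.trans hab
  have hab0 : 0 < a + b := by linarith
  refine ⟨1/2, ⟨by norm_num, by norm_num⟩, ?_, ?_⟩
  · refine (caustic_iff a b r s hb hab hr hs _).mpr ?_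
    simp only [linePt]
    field_simp
    linear_combination (4*(a+2*b)) * hs
  · intro u hu
    replace hu := (caustic_iff a b r s hb hab hr hs _).mp hu
    simp only [linePt] at hu
    field_simp at hu
    have key2 : ((2*a+b)*b^3*a^4*(a+b)^8) * ((1-2*u)^2) = 0 := by
      linear_combination (b^2*a^3*(a+b)^8) * hu - ((a+2*b)*b^2*a^3*(a+b)^8) * hs
    have key : (1-2*u)^2 = 0 :=
      (mul_eq_zero.mp key2).resolve_left (by positivity)
    have h0 : 1-2*u = 0 := pow_eq_zero_iff two_ne_zero |>.mp key
    linarith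

lemma TangentSeg_neg' {onC : ℝ × ℝ → Prop} (hsym : ∀ x y : ℝ, onC (-x,-y) ↔ onC (x,y))
    (x y x' y' : ℝ) (h : TangentSeg onC (x,y) (x',y')) :
    TangentSeg onC (-x,-y) (-x',-y') := by
  obtain ⟨t, ht, h1, h2⟩ := h
  have lp : ∀ u : ℝ, linePt (-x,-y) (-x',-y') u = (-(x + u*(x'-x)), -(y + u*(y'-y))) := by
    intro u; apply Prod.ext <;> simp only [linePt] <;> ring
  have lp2 : ∀ u : ℝ, linePt (x,y) (x',y') u = ((x + u*(x'-x)), (y + u*(y'-y))) := by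
    intro u; apply Prod.ext <;> simp only [linePt] <;> ring
  refine ⟨t, ht, ?_, ?_⟩
  · rw [lp, hsym, ← lp2]; exact h1
  · intro u hu; rw [lp, hsym, ← lp2] at hu; exact h2 u hu

lemma TangentSeg_flip' {onC : ℝ × ℝ → Prop} (hsym : ∀ x y : ℝ, onC (x,-y) ↔ onC (x,y))
    (x y x' y' : ℝ) (h : TangentSeg onC (x,y) (x',y')) :
    TangentSeg onC (x,-y) (x',-y') := by
  obtain ⟨t, ht, h1, h2⟩ := h
  have lp : ∀ u : ℝ, linePt (x,-y) (x',-y') u = ((x + u*(x'-x)), -(y + u*(y'-y))) := by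
    intro u; apply Prod.ext <;> simp only [linePt] <;> ring
  have lp2 : ∀ u : ℝ, linePt (x,y) (x',y') u = ((x + u*(x'-x)), (y + u*(y'-y))) := by
    intro u; apply Prod.ext <;> simp only [linePt] <;> ring
  refine ⟨t, ht, ?_, ?_⟩
  · rw [lp, hsym, ← lp2]; exact h1
  · intro u hu; rw [lp, hsym, ← lp2] at hu; exact h2 u hu

lemma TangentSeg_rev {onC : ℝ × ℝ → Prop} {P Q : ℝ × ℝ} (h : TangentSeg onC P Q) :
    TangentSeg onC Q P := by
  obtain ⟨t, ht, h1, h2⟩ := h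
  have lp : ∀ u : ℝ, linePt Q P u = linePt P Q (1-u) := by
    intro u; apply Prod.ext <;> simp only [linePt] <;> ring
  refine ⟨1-t, ⟨by linarith [ht.2], by linarith [ht.1]⟩, ?_, ?_⟩
  · rw [lp, show 1-(1-t) = t by ring]; exact h1
  · intro u hu; rw [lp] at hu; have := h2 _ hu; linarith

theorem simple_6periodic (a b : ℝ) (hab : a > b) (hb : b > 0) :
    let P1 : ℝ × ℝ := (a, 0)
    let P2 : ℝ × ℝ := (a^2/(a + b), b*Real.sqrt (b*(2*a + b))/(a + b))
    let P3 : ℝ × ℝ := (-(a^2/(a + b)), b*Real.sqrt (b*(2*a + b))/(a + b))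
    let P4 : ℝ × ℝ := (-a, 0)
    let P5 : ℝ × ℝ := (-P2.1, -P2.2)
    let P6 : ℝ × ℝ := (-P3.1, -P3.2)
    let a'' := a*Real.sqrt (a*(a + 2*b))/(a + b)
    let b'' := b*Real.sqrt (b*(2*a + b))/(a + b)
    let onE : ℝ × ℝ → Prop := fun p => (p.1/a)^2 + (p.2/b)^2 = 1
    let onCaustic : ℝ × ℝ → Prop := fun p => (p.1/a'')^2 + (p.2/b'')^2 = 1
    (onE P1 ∧ onE P2 ∧ onE P3 ∧ onE P4 ∧ onE P5 ∧ onE P6) ∧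
    (TangentSeg onCaustic P1 P2 ∧ TangentSeg onCaustic P2 P3 ∧
     TangentSeg onCaustic P3 P4 ∧ TangentSeg onCaustic P4 P5 ∧
     TangentSeg onCaustic P5 P6 ∧ TangentSeg onCaustic P6 P1) ∧
    edist' P1 P2 + edist' P2 P3 + edist' P3 P4 + edist' P4 P5 +
      edist' P5 P6 + edist' P6 P1 = 4*(a^2 + a*b + b^2)/(a + b) := by
  intro P1 P2 P3 P4 P5 P6 a'' b'' onE onCaustic
  have ha : 0 < a := hb.trans hab
  have hab0 : 0 < a + b := by linarith
  set r := Real.sqrt (a*(a + 2*b)) with hrdef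
  set s := Real.sqrt (b*(2*a + b)) with hsdef
  have hr : r^2 = a*(a+2*b) := Real.sq_sqrt (by positivity)
  have hs : s^2 = b*(2*a+b) := Real.sq_sqrt (by positivity)
  have hs0 : 0 < s := Real.sqrt_pos.mpr (by positivity)
  -- on-ellipse facts
  have e1 : onE P1 := by show (a/a)^2 + (0/b)^2 = 1; field_simp; ring
  have e2 : onE P2 := by
    show (a^2/(a+b)/a)^2 + (b*s/(a+b)/b)^2 = 1
    field_simp
    linear_combination hs
  have e3 : onE P3 := by
    show (-(a^2/(a+b))/a)^2 + (b*s/(a+b)/b)^2 = 1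
    field_simp
    linear_combination hs
  have e4 : onE P4 := by show (-a/a)^2 + (0/b)^2 = 1; field_simp; ring
  have e5 : onE P5 := by
    show (-(a^2/(a+b))/a)^2 + (-(b*s/(a+b))/b)^2 = 1
    field_simp
    linear_combination hs
  have e6 : onE P6 := by
    show (-(-(a^2/(a+b)))/a)^2 + (-(b*s/(a+b))/b)^2 = 1
    field_simp
    linear_combination hs
  -- tangency
  have hsymN : ∀ x y : ℝ, onCaustic (-x,-y) ↔ onCaustic (x,y) := by
    intro x y
    show ((-x)/(a*r/(a+b)))^2 + ((-y)/(b*s/(a+b)))^2 = 1 ↔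
      (x/(a*r/(a+b)))^2 + (y/(b*s/(a+b)))^2 = 1
    constructor <;> intro h <;> linear_combination h
  have hsymF : ∀ x y : ℝ, onCaustic (x,-y) ↔ onCaustic (x,y) := by
    intro x y
    show (x/(a*r/(a+b)))^2 + ((-y)/(b*s/(a+b)))^2 = 1 ↔
      (x/(a*r/(a+b)))^2 + (y/(b*s/(a+b)))^2 = 1
    constructor <;> intro h <;> linear_combination h
  have t12 : TangentSeg onCaustic (a,0) (a^2/(a+b), b*s/(a+b)) :=
    tangent12 a b r s hb hab hr hs
  have t23 : TangentSeg onCaustic (a^2/(a+b), b*s/(a+b)) (-(a^2/(a+b)), b*s/(a+b)) :=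
    tangent23 a b r s hb hab hr hs
  have t61 : TangentSeg onCaustic (a^2/(a+b), -(b*s/(a+b))) (a, 0) := by
    have h := TangentSeg_rev (TangentSeg_flip' hsymF a 0 (a^2/(a+b)) (b*s/(a+b)) t12)
    rwa [neg_zero] at h
  have t34 : TangentSeg onCaustic (-(a^2/(a+b)), b*s/(a+b)) (-a, 0) := by
    have h := TangentSeg_neg' hsymN (a^2/(a+b)) (-(b*s/(a+b))) a 0 t61
    rwa [neg_neg, neg_zero] at h
  have t45 : TangentSeg onCaustic (-a, 0) (-(a^2/(a+b)), -(b*s/(a+b))) := by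
    have h := TangentSeg_neg' hsymN a 0 (a^2/(a+b)) (b*s/(a+b)) t12
    rwa [neg_zero] at h
  have t56 : TangentSeg onCaustic (-(a^2/(a+b)), -(b*s/(a+b)))
      (-(-(a^2/(a+b))), -(b*s/(a+b))) :=
    TangentSeg_neg' hsymN (a^2/(a+b)) (b*s/(a+b)) (-(a^2/(a+b))) (b*s/(a+b)) t23
  have t61' : TangentSeg onCaustic (-(-(a^2/(a+b))), -(b*s/(a+b))) (a, 0) := by
    rwa [neg_neg]
  -- distances
  have d12 : edist' (a,0) (a^2/(a+b), b*s/(a+b)) = b := by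
    show Real.sqrt ((a - a^2/(a+b))^2 + (0 - b*s/(a+b))^2) = b
    rw [show (a - a^2/(a+b))^2 + (0 - b*s/(a+b))^2 = b^2 by
      field_simp; linear_combination (b^2) * hs]
    exact Real.sqrt_sq hb.le
  have d23 : edist' (a^2/(a+b), b*s/(a+b)) (-(a^2/(a+b)), b*s/(a+b)) = 2*a^2/(a+b) := by
    show Real.sqrt ((a^2/(a+b) - -(a^2/(a+b)))^2 + (b*s/(a+b) - b*s/(a+b))^2) = 2*a^2/(a+b)
    rw [show (a^2/(a+b) - -(a^2/(a+b)))^2 + (b*s/(a+b) - b*s/(a+b))^2 = (2*a^2/(a+b))^2 by ring]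
    exact Real.sqrt_sq (by positivity)
  have d34 : edist' (-(a^2/(a+b)), b*s/(a+b)) (-a, 0) = b := by
    show Real.sqrt ((-(a^2/(a+b)) - -a)^2 + (b*s/(a+b) - 0)^2) = b
    rw [show (-(a^2/(a+b)) - -a)^2 + (b*s/(a+b) - 0)^2 = b^2 by
      field_simp; linear_combination (b^2) * hs]
    exact Real.sqrt_sq hb.le
  have d45 : edist' (-a, 0) (-(a^2/(a+b)), -(b*s/(a+b))) = b := by
    show Real.sqrt ((-a - -(a^2/(a+b)))^2 + (0 - -(b*s/(a+b)))^2) = b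
    rw [show (-a - -(a^2/(a+b)))^2 + (0 - -(b*s/(a+b)))^2 = b^2 by
      field_simp; linear_combination (b^2) * hs]
    exact Real.sqrt_sq hb.le
  have d56 : edist' (-(a^2/(a+b)), -(b*s/(a+b))) (-(-(a^2/(a+b))), -(b*s/(a+b)))
      = 2*a^2/(a+b) := by
    show Real.sqrt ((-(a^2/(a+b)) - -(-(a^2/(a+b))))^2 + (-(b*s/(a+b)) - -(b*s/(a+b)))^2)
      = 2*a^2/(a+b)
    rw [show (-(a^2/(a+b)) - -(-(a^2/(a+b))))^2 + (-(b*s/(a+b)) - -(b*s/(a+b)))^2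
      = (2*a^2/(a+b))^2 by ring]
    exact Real.sqrt_sq (by positivity)
  have d61 : edist' (-(-(a^2/(a+b))), -(b*s/(a+b))) (a, 0) = b := by
    show Real.sqrt ((-(-(a^2/(a+b))) - a)^2 + (-(b*s/(a+b)) - 0)^2) = b
    rw [show (-(-(a^2/(a+b))) - a)^2 + (-(b*s/(a+b)) - 0)^2 = b^2 by
      field_simp; linear_combination (b^2) * hs]
    exact Real.sqrt_sq hb.le
  refine ⟨⟨e1, e2, e3, e4, e5, e6⟩, ⟨t12, t23, t34, t45, t56, t61'⟩, ?_⟩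
  show edist' (a,0) (a^2/(a+b), b*s/(a+b)) +
    edist' (a^2/(a+b), b*s/(a+b)) (-(a^2/(a+b)), b*s/(a+b)) +
    edist' (-(a^2/(a+b)), b*s/(a+b)) (-a, 0) +
    edist' (-a, 0) (-(a^2/(a+b)), -(b*s/(a+b))) +
    edist' (-(a^2/(a+b)), -(b*s/(a+b))) (-(-(a^2/(a+b))), -(b*s/(a+b))) +
    edist' (-(-(a^2/(a+b))), -(b*s/(a+b))) (a, 0) = 4*(a^2 + a*b + b^2)/(a + b)
  rw [d12, d23, d34, d45, d56, d61]
  field_simp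
  ring
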